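/- arXiv:1503.00455 — 3 statements merged into one kernel-verified Lean document; each statement's English description precedes it below -/
import Mathlib

section
/- Let m > 0 and a > 0. Among all functions v in H^1(ℝ) with ∫_ℝ |v|^2 dx ≤ m and v(0) = a, the function u(x) = a·exp(-a²|x|/m) minimizes the Dirichlet energy ∫_ℝ |v'|² dx, and the minimal value is a⁴/m. -/
open MeasureTheory Real Filter Topology

private lemma int_exp_Ioi (k : ℝ) (hk : 0 < k) :
    ∫ x in Set.Ioi (0 : ℝ), Real.exp (-k * x) = 1 / k := by
  have H : ∀ x ∈ Set.Ici (0 : ℝ),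
      HasDerivAt (fun x => (-Real.exp (-k * x)) / k) (Real.exp (-k * x)) x := by
    intro x _
    have h1 : HasDerivAt (fun x : ℝ => -k * x) (-k) x := by
      simpa using (hasDerivAt_id x).const_mul (-k)
    have h2 := h1.exp.neg.div_const k
    refine h2.congr_deriv ?_
    field_simp
  have htend : Filter.Tendsto (fun x => (-Real.exp (-k * x)) / k) Filter.atTop (𝓝 0) := by
    have : Filter.Tendsto (fun x : ℝ => Real.exp (-k * x)) Filter.atTop (𝓝 0) :=
      Real.tendsto_exp_atBot.comp (tendsto_id.const_mul_atTop_of_neg (by linarith))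
    simpa using (this.neg.div_const k)
  rw [MeasureTheory.integral_Ioi_of_hasDerivAt_of_tendsto' H
    (exp_neg_integrableOn_Ioi 0 hk) htend]
  norm_num
  ring_nf

private lemma cs_aux {A B C : ℝ} (hB : 0 ≤ B) (hC : 0 ≤ C)
    (key : ∀ t : ℝ, 0 ≤ A - 2 * t * B + t ^ 2 * C) : B ^ 2 ≤ A * C := by
  rcases eq_or_lt_of_le hC with hC0 | hC0
  · have hA : 0 ≤ A := by simpa using key 0
    rcases eq_or_lt_of_le hB with hB0 | hB0
    · nlinarith
    · have h := key ((A + 1) / (2 * B))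
      rw [← hC0] at h
      have he : 2 * ((A + 1) / (2 * B)) * B = A + 1 := by field_simp
      rw [he] at h
      nlinarith
  · have h := key (B / C)
    have e1 : (B / C) ^ 2 * C = B ^ 2 / C := by field_simp
    have e2 : 2 * (B / C) * B = 2 * (B ^ 2 / C) := by field_simp
    rw [e1, e2] at h
    have : B ^ 2 / C ≤ A := by linarith
    calc B ^ 2 = B ^ 2 / C * C := by field_simp
      _ ≤ A * C := by nlinarith

/-- Among all `v ∈ H¹(ℝ)` with `∫ v² ≤ m` and `v 0 = a`, the function
`u x = a * exp (-a² |x| / m)` minimizes the Dirichlet energy, with minimal value `a⁴ / m`. -/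
theorem stmt_0 (m a : ℝ) (hm : 0 < m) (ha : 0 < a) :
    (∫ x : ℝ, ((a ^ 2 / m) * (a * Real.exp (-(a ^ 2) * |x| / m))) ^ 2) = a ^ 4 / m ∧
    (∫ x : ℝ, (a * Real.exp (-(a ^ 2) * |x| / m)) ^ 2) ≤ m ∧
    a * Real.exp (-(a ^ 2) * |(0 : ℝ)| / m) = a ∧
    ∀ v v' : ℝ → ℝ, (∀ x, HasDerivAt v (v' x) x) →
      MemLp v 2 (volume : Measure ℝ) → MemLp v' 2 (volume : Measure ℝ) →
      (∫ x : ℝ, (v x) ^ 2) ≤ m → v 0 = a →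
      a ^ 4 / m ≤ ∫ x : ℝ, (v' x) ^ 2 := by
  have hk : (0 : ℝ) < 2 * a ^ 2 / m := by positivity
  have base : ∀ C : ℝ, (∫ x : ℝ, (C * Real.exp (-(a ^ 2) * |x| / m)) ^ 2)
      = C ^ 2 * (m / a ^ 2) := by
    intro C
    have heq : ∀ x : ℝ, (C * Real.exp (-(a ^ 2) * |x| / m)) ^ 2
        = C ^ 2 * Real.exp (-(2 * a ^ 2 / m) * |x|) := by
      intro x
      rw [mul_pow, sq (Real.exp _), ← Real.exp_add]
      congr 1
      ring
    have h2 : (∫ x : ℝ, C ^ 2 * Real.exp (-(2 * a ^ 2 / m) * |x|))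
        = 2 * ∫ x in Set.Ioi (0 : ℝ), C ^ 2 * Real.exp (-(2 * a ^ 2 / m) * x) :=
      integral_comp_abs (f := fun t => C ^ 2 * Real.exp (-(2 * a ^ 2 / m) * t))
    calc (∫ x : ℝ, (C * Real.exp (-(a ^ 2) * |x| / m)) ^ 2)
        = ∫ x : ℝ, C ^ 2 * Real.exp (-(2 * a ^ 2 / m) * |x|) := by
          congr 1; funext x; exact heq x
      _ = 2 * ∫ x in Set.Ioi (0 : ℝ), C ^ 2 * Real.exp (-(2 * a ^ 2 / m) * x) := h2
      _ = 2 * (C ^ 2 * (1 / (2 * a ^ 2 / m))) := by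
          rw [MeasureTheory.integral_const_mul, int_exp_Ioi _ hk]
      _ = C ^ 2 * (m / a ^ 2) := by field_simp
  refine ⟨?_, ?_, ?_, ?_⟩
  · have h := base (a ^ 2 / m * a)
    have heq : (∫ x : ℝ, ((a ^ 2 / m) * (a * Real.exp (-(a ^ 2) * |x| / m))) ^ 2)
        = ∫ x : ℝ, (a ^ 2 / m * a * Real.exp (-(a ^ 2) * |x| / m)) ^ 2 := by
      congr 1; funext x; ring
    rw [heq, h]
    field_simp
  · rw [base a]
    have : a ^ 2 * (m / a ^ 2) = m := by field_simp
    rw [this]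
  · simp
  · intro v v' hv hv2 hv'2 hvm hv0
    set A : ℝ := ∫ x : ℝ, (v x) ^ 2 with hA
    set B : ℝ := ∫ x : ℝ, |v x * v' x| with hBdef
    set C : ℝ := ∫ x : ℝ, (v' x) ^ 2 with hCdef
    have hAint : Integrable (fun x => v x ^ 2) volume := hv2.integrable_sq
    have hCint : Integrable (fun x => v' x ^ 2) volume := hv'2.integrable_sq
    have hvv'meas : AEStronglyMeasurable (fun x => v x * v' x) volume :=
      hv2.aestronglyMeasurable.mul hv'2.aestronglyMeasurable
    have hvv'int : Integrable (fun x => v x * v' x) volume := by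
      refine Integrable.mono' ((hAint.add hCint).div_const 2) hvv'meas ?_
      filter_upwards with x
      simp only [Real.norm_eq_abs, Pi.add_apply, abs_mul]
      nlinarith [sq_abs (v x), sq_abs (v' x), abs_nonneg (v x), abs_nonneg (v' x),
        sq_nonneg (|v x| - |v' x|)]
    have habsint : Integrable (fun x => |v x * v' x|) volume := hvv'int.abs
    have hd : ∀ x : ℝ, HasDerivAt (fun x => v x ^ 2) (2 * (v x * v' x)) x := by
      intro x
      have h := (hv x).pow 2
      norm_num at h
      refine h.congr_deriv ?_
      ring
    have hg'int : Integrable (fun x => 2 * (v x * v' x)) volume := hvv'int.const_mul 2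
    have htop : Filter.Tendsto (fun x => v x ^ 2) Filter.atTop (𝓝 0) :=
      tendsto_zero_of_hasDerivAt_of_integrableOn_Ioi (a := 0) (fun x _ => hd x)
        hg'int.integrableOn hAint.integrableOn
    have hbot : Filter.Tendsto (fun x => v x ^ 2) Filter.atBot (𝓝 0) :=
      tendsto_zero_of_hasDerivAt_of_integrableOn_Iic (a := 0) (fun x _ => hd x)
        hg'int.integrableOn hAint.integrableOn
    have I1 : ∫ x in Set.Ioi (0 : ℝ), 2 * (v x * v' x) = -(a ^ 2) := by
      rw [MeasureTheory.integral_Ioi_of_hasDerivAt_of_tendsto' (fun x _ => hd x)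
        hg'int.integrableOn htop]
      rw [hv0]; ring
    have I2 : ∫ x in Set.Iic (0 : ℝ), 2 * (v x * v' x) = a ^ 2 := by
      rw [MeasureTheory.integral_Iic_of_hasDerivAt_of_tendsto' (fun x _ => hd x)
        hg'int.integrableOn hbot]
      rw [hv0]; ring
    have habs_split : (∫ x in Set.Iic (0 : ℝ), |v x * v' x|)
        + (∫ x in Set.Ioi (0 : ℝ), |v x * v' x|) = B :=
      intervalIntegral.integral_Iic_add_Ioi habsint.integrableOn habsint.integrableOn
    have habs_le : ∀ s : Set ℝ, |∫ x in s, v x * v' x| ≤ ∫ x in s, |v x * v' x| := by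
      intro s
      simpa only [Real.norm_eq_abs] using MeasureTheory.norm_integral_le_integral_norm
        (μ := volume.restrict s) (fun x => v x * v' x)
    have hmul : ∀ s : Set ℝ, (∫ x in s, 2 * (v x * v' x)) = 2 * ∫ x in s, v x * v' x :=
      fun s => MeasureTheory.integral_const_mul 2 _
    have hIic : a ^ 2 ≤ 2 * ∫ x in Set.Iic (0 : ℝ), |v x * v' x| := by
      have h1 := habs_le (Set.Iic 0)
      have h2 := le_abs_self (∫ x in Set.Iic (0 : ℝ), v x * v' x)
      have h3 := hmul (Set.Iic 0)
      rw [I2] at h3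
      linarith
    have hIoi : a ^ 2 ≤ 2 * ∫ x in Set.Ioi (0 : ℝ), |v x * v' x| := by
      have h1 := habs_le (Set.Ioi 0)
      have h2 := neg_le_abs (∫ x in Set.Ioi (0 : ℝ), v x * v' x)
      have h3 := hmul (Set.Ioi 0)
      rw [I1] at h3
      linarith
    have haB : a ^ 2 ≤ B := by nlinarith [hIic, hIoi, habs_split]
    have hBnn : 0 ≤ B := MeasureTheory.integral_nonneg fun x => abs_nonneg _
    have hCnn : 0 ≤ C := MeasureTheory.integral_nonneg fun x => sq_nonneg _
    have key : ∀ t : ℝ, 0 ≤ A - 2 * t * B + t ^ 2 * C := by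
      intro t
      have hnn : 0 ≤ ∫ x : ℝ, (|v x| - t * |v' x|) ^ 2 :=
        MeasureTheory.integral_nonneg fun x => sq_nonneg _
      have hexp : (∫ x : ℝ, (|v x| - t * |v' x|) ^ 2)
          = A - 2 * t * B + t ^ 2 * C := by
        have heq : ∀ x : ℝ, (|v x| - t * |v' x|) ^ 2
            = v x ^ 2 - (2 * t) * |v x * v' x| + t ^ 2 * v' x ^ 2 := by
          intro x
          rw [abs_mul]
          nlinarith [sq_abs (v x), sq_abs (v' x)]
        calc (∫ x : ℝ, (|v x| - t * |v' x|) ^ 2)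
            = ∫ x : ℝ, (v x ^ 2 - (2 * t) * |v x * v' x| + t ^ 2 * v' x ^ 2) := by
              congr 1; funext x; exact heq x
          _ = A - 2 * t * B + t ^ 2 * C := by
              have hsub : Integrable (fun x => v x ^ 2 - (2 * t) * |v x * v' x|) volume :=
                hAint.sub (habsint.const_mul (2 * t))
              rw [MeasureTheory.integral_add hsub
                (hCint.const_mul (t ^ 2)), MeasureTheory.integral_sub hAint
                (habsint.const_mul (2 * t)), MeasureTheory.integral_const_mul,
                MeasureTheory.integral_const_mul]
      linarith [hexp ▸ hnn]
    have hCS : B ^ 2 ≤ A * C := cs_aux hBnn hCnn key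
    have hAnn : 0 ≤ A := MeasureTheory.integral_nonneg fun x => sq_nonneg _
    have h4 : a ^ 4 ≤ m * C := by nlinarith [haB, hCS, hvm, hCnn, hAnn, sq_nonneg a]
    rw [div_le_iff₀ hm]
    linarith [h4]
end

section
/- Let p ∈ (4,6), μ > 0, N a positive integer, and C_p = [(p(p−4)/16)^{2/(p−2)} + (p/8)(p(p−4)/16)^{(4−p)/(p−2)}]^{(p−2)/(6−p)}. If L > C_p · N^{4/(6−p)} · μ^{−(p−2)/(6−p)}, then the point ā = (N²p(p−4)/(16L²))^{1/(p−2)} satisfies ā < √(μ/L) and a²L + (N²p/(8L))·a^{4−p} < μ at a = ā. -/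
open Real

private lemma aux_rpow9 (n k L t : ℝ) (hn : 0 < n) (hk : 0 < k) (hL : 0 < L) :
    (n ^ 2 * k / L ^ 2) ^ t = n ^ (2 * t) * k ^ t * L ^ (-(2 * t)) := by
  rw [div_rpow (by positivity) (by positivity),
      Real.mul_rpow (by positivity) hk.le,
      ← Real.rpow_natCast n 2, ← Real.rpow_natCast L 2,
      ← Real.rpow_mul hn.le, ← Real.rpow_mul hL.le,
      Real.rpow_neg hL.le, div_eq_mul_inv]
  norm_num

/-- Explicit existence threshold for `p ∈ (4,6)`: if
`L > C_p N^(4/(6-p)) μ^(-(p-2)/(6-p))` then `ā < √(μ/L)` and `g ā < μ`. -/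
theorem stmt_9 (p : ℝ) (hp : 4 < p) (hp' : p < 6) (μ : ℝ) (hμ : 0 < μ)
    (N : ℕ) (hN : 0 < N) (L : ℝ)
    (Cp : ℝ)
    (hCp : Cp = ((p * (p - 4) / 16) ^ (2 / (p - 2)) +
      (p / 8) * (p * (p - 4) / 16) ^ ((4 - p) / (p - 2))) ^ ((p - 2) / (6 - p)))
    (hL : Cp * (N : ℝ) ^ (4 / (6 - p)) * μ ^ (-((p - 2) / (6 - p))) < L) :
    let abar : ℝ := ((N : ℝ) ^ 2 * p * (p - 4) / (16 * L ^ 2)) ^ (1 / (p - 2))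
    abar < Real.sqrt (μ / L) ∧
    abar ^ 2 * L + ((N : ℝ) ^ 2 * p / (8 * L)) * abar ^ (4 - p) < μ := by
  intro abar
  have hp2 : (0:ℝ) < p - 2 := by linarith
  have hp6 : (0:ℝ) < 6 - p := by linarith
  have hp4 : (0:ℝ) < p - 4 := by linarith
  have hp0 : (0:ℝ) < p := by linarith
  have hn : (0:ℝ) < (N:ℝ) := by exact_mod_cast hN
  set k : ℝ := p * (p - 4) / 16 with hkdef
  have hk : 0 < k := by rw [hkdef]; positivity
  set B : ℝ := k ^ (2 / (p - 2)) + (p / 8) * k ^ ((4 - p) / (p - 2)) with hBdef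
  have hB : 0 < B := by
    have h1 := Real.rpow_pos_of_pos hk (2 / (p - 2))
    have h2 := Real.rpow_pos_of_pos hk ((4 - p) / (p - 2))
    have h3 : 0 < (p / 8) * k ^ ((4 - p) / (p - 2)) := by positivity
    rw [hBdef]; exact add_pos h1 h3
  have hCp0 : 0 < Cp := by rw [hCp]; exact Real.rpow_pos_of_pos hB _
  have hL0 : 0 < L := by
    refine lt_trans ?_ hL
    exact mul_pos (mul_pos hCp0 (Real.rpow_pos_of_pos hn _)) (Real.rpow_pos_of_pos hμ _)
  set X : ℝ := (N:ℝ) ^ 2 * k / L ^ 2 with hXdef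
  have hX0 : 0 < X := by rw [hXdef]; positivity
  have habar : abar = X ^ (1 / (p - 2)) := by
    show ((N : ℝ) ^ 2 * p * (p - 4) / (16 * L ^ 2)) ^ (1 / (p - 2)) = _
    rw [hXdef, hkdef]
    congr 1
    field_simp
  have habar0 : 0 < abar := by rw [habar]; exact Real.rpow_pos_of_pos hX0 _
  -- the two terms
  have hab2 : abar ^ 2 = X ^ (2 / (p - 2)) := by
    rw [habar, ← Real.rpow_natCast (X ^ (1 / (p - 2))) 2, ← Real.rpow_mul hX0.le]
    congr 1
    push_cast
    ring
  have e1 : abar ^ 2 * L = k ^ (2 / (p - 2)) * ((N:ℝ) ^ (4 / (p - 2)) * L ^ ((p - 6) / (p - 2))) := by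
    rw [hab2, hXdef, aux_rpow9 _ _ _ _ hn hk hL0, mul_assoc, ← Real.rpow_add_one hL0.ne',
        show -(2 * (2 / (p - 2))) + 1 = (p - 6) / (p - 2) by field_simp; ring,
        show 2 * (2 / (p - 2)) = 4 / (p - 2) by ring]
    ring
  have hab4p : abar ^ (4 - p) = X ^ ((4 - p) / (p - 2)) := by
    rw [habar, ← Real.rpow_mul hX0.le]
    congr 1
    ring
  have e2 : ((N : ℝ) ^ 2 * p / (8 * L)) * abar ^ (4 - p)
      = (p / 8) * k ^ ((4 - p) / (p - 2)) * ((N:ℝ) ^ (4 / (p - 2)) * L ^ ((p - 6) / (p - 2))) := by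
    rw [hab4p, hXdef, aux_rpow9 _ _ _ _ hn hk hL0]
    have hN2 : ((N : ℝ) ^ 2 : ℝ) = (N:ℝ) ^ (2:ℝ) := by
      rw [← Real.rpow_natCast (N:ℝ) 2]; norm_num
    have hLinv : (8 * L)⁻¹ = 8⁻¹ * L ^ (-1 : ℝ) := by
      rw [Real.rpow_neg_one, mul_inv]
    have hNcomb : (N:ℝ) ^ (2:ℝ) * (N:ℝ) ^ (2 * ((4 - p) / (p - 2))) = (N:ℝ) ^ (4 / (p - 2)) := by
      rw [← Real.rpow_add hn]
      congr 1
      field_simp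
      ring
    have hLcomb : L ^ (-1 : ℝ) * L ^ (-(2 * ((4 - p) / (p - 2)))) = L ^ ((p - 6) / (p - 2)) := by
      rw [← Real.rpow_add hL0]
      congr 1
      field_simp
      ring
    calc ((N : ℝ) ^ 2 * p / (8 * L)) *
          ((N:ℝ) ^ (2 * ((4 - p) / (p - 2))) * k ^ ((4 - p) / (p - 2)) * L ^ (-(2 * ((4 - p) / (p - 2)))))
        = (p / 8) * k ^ ((4 - p) / (p - 2)) *
          (((N:ℝ) ^ (2:ℝ) * (N:ℝ) ^ (2 * ((4 - p) / (p - 2)))) *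
           (L ^ (-1 : ℝ) * L ^ (-(2 * ((4 - p) / (p - 2)))))) := by
          rw [← hN2]
          field_simp [Real.rpow_neg_one]
          ring
          rw [Real.rpow_neg_one, mul_inv_cancel₀ hL0.ne']
      _ = (p / 8) * k ^ ((4 - p) / (p - 2)) * ((N:ℝ) ^ (4 / (p - 2)) * L ^ ((p - 6) / (p - 2))) := by
          rw [hNcomb, hLcomb]
  -- the comparison
  set r : ℝ := (6 - p) / (p - 2) with hr
  have hr0 : 0 < r := div_pos hp6 hp2
  have hlhs0 : (0:ℝ) ≤ Cp * (N : ℝ) ^ (4 / (6 - p)) * μ ^ (-((p - 2) / (6 - p))) :=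
    (mul_pos (mul_pos hCp0 (Real.rpow_pos_of_pos hn _)) (Real.rpow_pos_of_pos hμ _)).le
  have hpow := Real.rpow_lt_rpow hlhs0 hL hr0
  rw [Real.mul_rpow (by positivity) (Real.rpow_pos_of_pos hμ _).le,
      Real.mul_rpow hCp0.le (Real.rpow_pos_of_pos hn _).le,
      ← Real.rpow_mul hn.le, ← Real.rpow_mul hμ.le,
      show 4 / (6 - p) * r = 4 / (p - 2) by rw [hr]; field_simp,
      show -((p - 2) / (6 - p)) * r = -1 by rw [hr]; field_simp,
      hCp, ← Real.rpow_mul hB.le,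
      show (p - 2) / (6 - p) * r = 1 by rw [hr]; field_simp,
      Real.rpow_one, Real.rpow_neg_one] at hpow
  -- hpow : B * N ^ (4/(p-2)) * μ⁻¹ < L ^ r
  have hLr : 0 < L ^ r := Real.rpow_pos_of_pos hL0 _
  have hA : L ^ ((p - 6) / (p - 2)) = (L ^ r)⁻¹ := by
    rw [← Real.rpow_neg hL0.le]
    congr 1
    rw [hr]; ring
  have hmain : B * ((N:ℝ) ^ (4 / (p - 2)) * L ^ ((p - 6) / (p - 2))) < μ := by
    rw [hA]
    have h1 : B * (N:ℝ) ^ (4 / (p - 2)) < L ^ r * μ := by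
      have := (div_lt_iff₀ hμ).mp (by rw [div_eq_mul_inv]; exact hpow)
      linarith [this]
    rw [← mul_assoc]
    rw [mul_inv_lt_iff₀ hLr]
    linarith [h1]
  have hterm2 : 0 < ((N : ℝ) ^ 2 * p / (8 * L)) * abar ^ (4 - p) := by
    have := Real.rpow_pos_of_pos habar0 (4 - p)
    positivity
  have hg : abar ^ 2 * L + ((N : ℝ) ^ 2 * p / (8 * L)) * abar ^ (4 - p)
      = B * ((N:ℝ) ^ (4 / (p - 2)) * L ^ ((p - 6) / (p - 2))) := by
    rw [e1, e2, hBdef]; ring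
  constructor
  · rw [Real.lt_sqrt habar0.le, lt_div_iff₀ hL0]
    have h2 : abar ^ 2 * L + ((N : ℝ) ^ 2 * p / (8 * L)) * abar ^ (4 - p) < μ := by
      rw [hg]; exact hmain
    linarith
  · rw [hg]; exact hmain
end

section
/- Let p ∈ [4,6), μ > 0, L > 0, and K_G > 0. Suppose u satisfies ‖u'‖_{L²}² ≤ L‖u‖_∞^p and ‖u‖_∞ ≤ K_G ‖u‖_{L²}^{1/2} ‖u'‖_{L²}^{1/2} with ‖u‖_{L²}² = μ. Then for every integer n ≥ 0, ‖u'‖_{L²}² ≤ (1/(K_G⁴μ)) · ‖u‖_∞^{4(p/4)^{n+1}} · (K_G⁴μL)^{Σ_{i=0}^{n} (p/4)^i}. -/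
open Real Finset

/-- Inductive inequality of the nonexistence proof: if `t = ‖u'‖_{L²}` and `s = ‖u‖_∞`
satisfy `t² ≤ L s^p` and `s ≤ K_G μ^(1/4) t^(1/2)` (with `‖u‖_{L²}² = μ`), then for all
`n ≥ 0`, `t² ≤ (K_G⁴μ)⁻¹ s^(4(p/4)^(n+1)) (K_G⁴μL)^(Σ_{i=0}^n (p/4)^i)`. -/
theorem stmt_13 (p : ℝ) (hp : 4 ≤ p) (hp' : p < 6) (μ L KG : ℝ)
    (hμ : 0 < μ) (hL : 0 < L) (hKG : 0 < KG)
    (t s : ℝ) (ht : 0 ≤ t) (hs : 0 ≤ s)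
    (h1 : t ^ 2 ≤ L * s ^ p)
    (h2 : s ≤ KG * μ ^ ((1 : ℝ) / 4) * t ^ ((1 : ℝ) / 2)) :
    ∀ n : ℕ, t ^ 2 ≤ (1 / (KG ^ 4 * μ)) * s ^ (4 * (p / 4) ^ (n + 1)) *
      (KG ^ 4 * μ * L) ^ (∑ i ∈ Finset.range (n + 1), (p / 4) ^ i) := by
  have hC : (0:ℝ) < KG ^ 4 * μ := by positivity
  have hCL : (0:ℝ) < KG ^ 4 * μ * L := by positivity
  have hsp : (0:ℝ) ≤ s ^ p := Real.rpow_nonneg hs p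
  -- s^4 ≤ KG^4 μ t^2
  have hs4 : s ^ (4:ℕ) ≤ KG ^ 4 * μ * t ^ 2 := by
    have h := pow_le_pow_left₀ hs h2 4
    calc s ^ (4:ℕ) ≤ (KG * μ ^ ((1:ℝ)/4) * t ^ ((1:ℝ)/2)) ^ (4:ℕ) := h
      _ = KG ^ 4 * (μ ^ ((1:ℝ)/4)) ^ (4:ℕ) * (t ^ ((1:ℝ)/2)) ^ (4:ℕ) := by ring
      _ = KG ^ 4 * μ * t ^ 2 := by
          rw [← Real.rpow_natCast (μ ^ ((1:ℝ)/4)) 4, ← Real.rpow_natCast (t ^ ((1:ℝ)/2)) 4,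
            ← Real.rpow_mul hμ.le, ← Real.rpow_mul ht]
          norm_num
  intro n
  induction n with
  | zero =>
    simp only [zero_add, pow_one, Finset.range_one, Finset.sum_singleton, pow_zero,
      Real.rpow_one]
    rw [show (4 * (p/4) : ℝ) = p by ring]
    calc t ^ 2 ≤ L * s ^ p := h1
      _ = 1 / (KG ^ 4 * μ) * s ^ p * (KG ^ 4 * μ * L) := by field_simp
  | succ n ih =>
    have hqn : (0:ℝ) ≤ (p/4) ^ (n+1) := by positivity
    have key : s ^ (4 * (p/4) ^ (n+1)) ≤
        (KG ^ 4 * μ * L) ^ ((p/4) ^ (n+1)) * s ^ (4 * (p/4) ^ (n+1+1)) := by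
      calc s ^ (4 * (p/4) ^ (n+1)) = (s ^ (4:ℕ)) ^ ((p/4) ^ (n+1)) := by
            rw [← Real.rpow_natCast s 4, ← Real.rpow_mul hs]; norm_num
        _ ≤ (KG ^ 4 * μ * t ^ 2) ^ ((p/4) ^ (n+1)) :=
            Real.rpow_le_rpow (by positivity) hs4 hqn
        _ ≤ (KG ^ 4 * μ * (L * s ^ p)) ^ ((p/4) ^ (n+1)) :=
            Real.rpow_le_rpow (by positivity)
              (by nlinarith) hqn
        _ = (KG ^ 4 * μ * L * s ^ p) ^ ((p/4) ^ (n+1)) := by ring_nf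
        _ = (KG ^ 4 * μ * L) ^ ((p/4) ^ (n+1)) * (s ^ p) ^ ((p/4) ^ (n+1)) :=
            Real.mul_rpow hCL.le hsp
        _ = (KG ^ 4 * μ * L) ^ ((p/4) ^ (n+1)) * s ^ (4 * (p/4) ^ (n+1+1)) := by
            rw [← Real.rpow_mul hs]
            congr 1
            ring
    calc t ^ 2 ≤ (1 / (KG ^ 4 * μ)) * s ^ (4 * (p / 4) ^ (n + 1)) *
          (KG ^ 4 * μ * L) ^ (∑ i ∈ Finset.range (n + 1), (p / 4) ^ i) := ih
      _ ≤ (1 / (KG ^ 4 * μ)) *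
          ((KG ^ 4 * μ * L) ^ ((p/4) ^ (n+1)) * s ^ (4 * (p/4) ^ (n+1+1))) *
          (KG ^ 4 * μ * L) ^ (∑ i ∈ Finset.range (n + 1), (p / 4) ^ i) := by
            apply mul_le_mul_of_nonneg_right
              (mul_le_mul_of_nonneg_left key (by positivity)) (by positivity)
      _ = (1 / (KG ^ 4 * μ)) * s ^ (4 * (p / 4) ^ (n + 1 + 1)) *
          (KG ^ 4 * μ * L) ^ (∑ i ∈ Finset.range (n + 1 + 1), (p / 4) ^ i) := by
            rw [show ∑ i ∈ Finset.range (n+1+1), (p/4) ^ i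
                = (∑ i ∈ Finset.range (n+1), (p/4) ^ i) + (p/4) ^ (n+1) from
                Finset.sum_range_succ _ _, Real.rpow_add hCL]
            generalize (KG ^ 4 * μ * L) ^ ((p/4) ^ (n+1)) = A
            generalize s ^ (4 * (p/4) ^ (n+1+1)) = S
            generalize (KG ^ 4 * μ * L) ^ (∑ i ∈ Finset.range (n+1), (p/4) ^ i) = B
            ring
end
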